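/- For any complete and consistent SPN S there exists a normal SPN S' with Pr_{S'} = Pr_S and |S'| = O(|S|^2), where a normal SPN is one that is (1) complete and decomposable, (2) weight-normalized at every sum node, and (3) has every terminal node a univariate distribution over a Boolean variable and every sum node of scope size at least 2. -/

import Mathlib

noncomputable section

open Finset

/-- A Sum-Product Network over `N` Boolean variables: leaves are indicators
`I[X_i = b]`, internal nodes are weighted sums and products. -/
inductive SPN (N : ℕ) where
  | leaf (i : Fin N) (b : Bool)
  | sum (k : ℕ) (w : Fin k → ℝ) (ch : Fin k → SPN N)
  | prod (k : ℕ) (ch : Fin k → SPN N)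

namespace SPN

variable {N : ℕ}

/-- The network polynomial, evaluated at a complete assignment. -/
def eval : SPN N → (Fin N → Bool) → ℝ
  | .leaf i b, x => if x i = b then 1 else 0
  | .sum _ w ch, x => ∑ j, w j * eval (ch j) x
  | .prod _ ch, x => ∏ j, eval (ch j) x

/-- The scope of a node: the variables appearing among its descendant indicators. -/
def scope : SPN N → Finset (Fin N)
  | .leaf i _ => {i}
  | .sum _ _ ch => univ.biUnion fun j => scope (ch j)
  | .prod _ ch => univ.biUnion fun j => scope (ch j)

/-- Size of an SPN: number of nodes plus number of edges. -/
def size : SPN N → ℕ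
  | .leaf _ _ => 1
  | .sum k _ ch => 1 + k + ∑ j, size (ch j)
  | .prod k ch => 1 + k + ∑ j, size (ch j)

/-- Completeness: all children of every sum node have the same scope. -/
def complete : SPN N → Prop
  | .leaf _ _ => True
  | .sum _ _ ch => (∀ i j, scope (ch i) = scope (ch j)) ∧ ∀ j, complete (ch j)
  | .prod _ ch => ∀ j, complete (ch j)

/-- Decomposability: children of every product node have pairwise disjoint scopes. -/
def decomposable : SPN N → Prop
  | .leaf _ _ => True
  | .sum _ _ ch => ∀ j, decomposable (ch j)
  | .prod _ ch =>
      (∀ i j, i ≠ j → Disjoint (scope (ch i)) (scope (ch j))) ∧ ∀ j, decomposable (ch j)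

/-- The set of indicators `(variable, value)` appearing among descendants. -/
def indicators : SPN N → Finset (Fin N × Bool)
  | .leaf i b => {(i, b)}
  | .sum _ _ ch => univ.biUnion fun j => indicators (ch j)
  | .prod _ ch => univ.biUnion fun j => indicators (ch j)

/-- Consistency: no variable appears negated in one child of a product node and
non-negated in another child. -/
def consistent : SPN N → Prop
  | .leaf _ _ => True
  | .sum _ _ ch => ∀ j, consistent (ch j)
  | .prod _ ch =>
      (∀ i j X, i ≠ j → (X, true) ∈ indicators (ch i) →
        (X, false) ∈ indicators (ch j) → False) ∧ ∀ j, consistent (ch j)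

/-- All sum-node weights are nonnegative. -/
def nonnegWeights : SPN N → Prop
  | .leaf _ _ => True
  | .sum _ w ch => (∀ j, 0 ≤ w j) ∧ ∀ j, nonnegWeights (ch j)
  | .prod _ ch => ∀ j, nonnegWeights (ch j)

/-- Weight-normalized: at every sum node the weights are nonnegative and sum to 1. -/
def weightNormalized : SPN N → Prop
  | .leaf _ _ => True
  | .sum _ w ch => (∀ j, 0 ≤ w j) ∧ (∑ j, w j) = 1 ∧ ∀ j, weightNormalized (ch j)
  | .prod _ ch => ∀ j, weightNormalized (ch j)

/-- Extend an assignment of the scope variables to a complete assignment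
(variables outside the scope are set to `false`; `eval` does not depend on them). -/
def extendScope (S : SPN N) (y : {i // i ∈ scope S} → Bool) : Fin N → Bool :=
  fun i => if h : i ∈ scope S then y ⟨i, h⟩ else false

/-- The sum of the network polynomial of `S` over all assignments of the
variables in `scope S`. -/
def val (S : SPN N) : ℝ :=
  ∑ y : {i // i ∈ scope S} → Bool, eval S (extendScope S y)

/-- The probability distribution induced by an SPN:
`Pr S x = f_S(x) / Σ_y f_S(y)`, the sum ranging over assignments of the scope. -/
def Pr (S : SPN N) (x : Fin N → Bool) : ℝ := eval S x / val S

end SPN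
namespace SPN

variable {N : ℕ}

/-- A monomial: a coefficient together with a multiset of indicators. -/
abbrev Monomial (N : ℕ) := ℝ × Multiset (Fin N × Bool)

/-- Product of two sum-of-products expansions. -/
def mulMono (a b : Multiset (Monomial N)) : Multiset (Monomial N) :=
  a.bind fun m => b.map fun m' => (m.1 * m'.1, m.2 + m'.2)

/-- The fully expanded sum-of-products form of the network polynomial,
obtained by distributing products over sums. -/
def monomials : SPN N → Multiset (Monomial N)
  | .leaf i b => {(1, {(i, b)})}
  | .sum _ w ch => ∑ j, (monomials (ch j)).map fun m => (w j * m.1, m.2)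
  | .prod k ch => (List.ofFn fun j : Fin k => monomials (ch j)).foldr mulMono {(1, 0)}

/-- Two SPNs have the same DAG structure (only sum-node weights may differ). -/
def sameShape : SPN N → SPN N → Prop
  | .leaf i b, .leaf i' b' => i = i' ∧ b = b'
  | .sum k _ ch, .sum k' _ ch' => ∃ h : k = k', ∀ j, sameShape (ch j) (ch' (Fin.cast h j))
  | .prod k ch, .prod k' ch' => ∃ h : k = k', ∀ j, sameShape (ch j) (ch' (Fin.cast h j))
  | _, _ => False

/-- `IsChild c p`: `c` is a child of `p`. -/
inductive IsChild : SPN N → SPN N → Prop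
  | sum {k : ℕ} {w : Fin k → ℝ} {ch : Fin k → SPN N} (j : Fin k) :
      IsChild (ch j) (.sum k w ch)
  | prod {k : ℕ} {ch : Fin k → SPN N} (j : Fin k) :
      IsChild (ch j) (.prod k ch)

/-- `Descendant d v`: `d` is a (weak) descendant of `v`. -/
def Descendant : SPN N → SPN N → Prop := Relation.ReflTransGen IsChild

/-- A decision stump: a univariate distribution `p·I[X=1] + (1-p)·I[X=0]`
over a single Boolean variable, used as terminal node of a normal SPN. -/
def isStump : SPN N → Prop
  | .sum 2 w ch =>
      (∃ i, ch 0 = .leaf i true ∧ ch 1 = .leaf i false) ∧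
      0 ≤ w 0 ∧ 0 ≤ w 1 ∧ w 0 + w 1 = 1
  | _ => False

/-- Condition 3 of normality: terminal nodes are univariate distributions and
every (proper) sum node has scope of size at least 2. -/
def normal3 : SPN N → Prop
  | .leaf _ _ => False
  | .sum k w ch =>
      isStump (SPN.sum k w ch) ∨
      (2 ≤ (scope (SPN.sum k w ch)).card ∧ ∀ j, normal3 (ch j))
  | .prod _ ch => ∀ j, normal3 (ch j)

/-- A normal SPN: complete, decomposable, weight-normalized, terminal nodes are
univariate distributions, and sum nodes have scope of size at least 2. -/
def normal (S : SPN N) : Prop :=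
  complete S ∧ decomposable S ∧ weightNormalized S ∧ normal3 S

/-- The height of an SPN: length of the longest root-to-leaf path. -/
def height : SPN N → ℕ
  | .leaf _ _ => 0
  | .sum _ _ ch => 1 + Finset.univ.sup fun j => height (ch j)
  | .prod _ ch => 1 + Finset.univ.sup fun j => height (ch j)

/-- Sum layers alternate with product layers. -/
def alternating : SPN N → Prop
  | .leaf _ _ => True
  | .sum _ _ ch => ∀ j,
      (¬ ∃ (k' : ℕ) (w' : Fin k' → ℝ) (ch' : Fin k' → SPN N), ch j = SPN.sum k' w' ch') ∧
      alternating (ch j)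
  | .prod _ ch => ∀ j,
      (¬ ∃ (k' : ℕ) (ch' : Fin k' → SPN N), ch j = SPN.prod k' ch') ∧
      alternating (ch j)

/-- The number of hidden-variable parents of the observable `X` in the constructed
BN: the number of sum nodes whose scope contains `X`. -/
def parentCount : SPN N → Fin N → ℕ
  | .leaf _ _, _ => 0
  | .sum k w ch, X =>
      (if X ∈ scope (SPN.sum k w ch) then 1 else 0) + ∑ j, parentCount (ch j) X
  | .prod _ ch, X => ∑ j, parentCount (ch j) X

/-- The number of sum nodes (hidden variables of the constructed BN). -/
def countSum : SPN N → ℕ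
  | .leaf _ _ => 0
  | .sum _ _ ch => 1 + ∑ j, countSum (ch j)
  | .prod _ ch => ∑ j, countSum (ch j)

/-- Total size of the decision-stump ADDs of the hidden variables. -/
def stumpsSize : SPN N → ℕ
  | .leaf _ _ => 0
  | .sum k _ ch => (1 + k) + ∑ j, stumpsSize (ch j)
  | .prod _ ch => ∑ j, stumpsSize (ch j)

/-- Total number of edges of the bipartite BN graph: a hidden variable `H_v`
points to observable `X` iff `X ∈ scope v`. -/
def sumScopeEdges : SPN N → ℕ
  | .leaf _ _ => 0
  | .sum k w ch => (scope (SPN.sum k w ch)).card + ∑ j, sumScopeEdges (ch j)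
  | .prod _ ch => ∑ j, sumScopeEdges (ch j)

/-- Size of the ADD `A_X` of observable `X`: the size of the sub-SPN induced by
the nodes whose scope contains `X` (an upper bound on the contracted ADD). -/
def addSize : SPN N → Fin N → ℕ
  | .leaf i _, X => if i = X then 1 else 0
  | .sum k w ch, X =>
      (if X ∈ scope (SPN.sum k w ch) then
        1 + (Finset.univ.filter fun j => X ∈ scope (ch j)).card
       else 0) + ∑ j, addSize (ch j) X
  | .prod k ch, X =>
      (if X ∈ scope (SPN.prod k ch) then
        1 + (Finset.univ.filter fun j => X ∈ scope (ch j)).card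
       else 0) + ∑ j, addSize (ch j) X

end SPN

/-- A bipartite Bayesian network over `N` observable Boolean variables:
hidden (source) variables `H` with unconditional priors, and observable
variables whose CPDs are conditioned on the hidden variables. -/
structure BayesNet (N : ℕ) where
  H : Type
  fintypeH : Fintype H
  decEqH : DecidableEq H
  dom : H → ℕ
  prior : (h : H) → Fin (dom h) → ℝ
  cpd : Fin N → ((h : H) → Fin (dom h)) → Bool → ℝ

attribute [instance] BayesNet.fintypeH BayesNet.decEqH

/-- The marginal distribution of the observables in a bipartite BN: sum over all
hidden assignments of the product of all priors and all CPDs. -/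
def BayesNet.PrB {N : ℕ} (B : BayesNet N) (x : Fin N → Bool) : ℝ :=
  ∑ σ : (h : B.H) → Fin (B.dom h),
    (∏ h, B.prior h (σ h)) * ∏ i, B.cpd i σ (x i)
namespace SPN

variable {N : ℕ}

/-! ### Basic lemmas -/

lemma size_pos (S : SPN N) : 1 ≤ S.size := by
  cases S <;> simp only [size] <;> omega

lemma eval_nonneg {S : SPN N} (h : S.nonnegWeights) (x : Fin N → Bool) : 0 ≤ S.eval x := by
  induction S with
  | leaf i b => simp only [eval]; split <;> norm_num
  | sum k w ch ih =>
      exact Finset.sum_nonneg fun j _ => mul_nonneg (h.1 j) (ih j (h.2 j) )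
  | prod k ch ih =>
      exact Finset.prod_nonneg fun j _ => ih j (h j)

lemma eval_congr {S : SPN N} {x y : Fin N → Bool} (h : ∀ i ∈ S.scope, x i = y i) :
    S.eval x = S.eval y := by
  induction S with
  | leaf i b =>
      simp only [eval]; rw [h i (by simp [scope])]
  | sum k w ch ih =>
      simp only [eval]
      exact Finset.sum_congr rfl fun j _ => by
        rw [ih j fun i hi => h i (by
          simp only [scope]; exact Finset.mem_biUnion.mpr ⟨j, Finset.mem_univ j, hi⟩)]
  | prod k ch ih =>
      simp only [eval]
      exact Finset.prod_congr rfl fun j _ => by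
        rw [ih j fun i hi => h i (by
          simp only [scope]; exact Finset.mem_biUnion.mpr ⟨j, Finset.mem_univ j, hi⟩)]

lemma mem_scope_iff {S : SPN N} {i : Fin N} : i ∈ S.scope ↔ ∃ b, (i, b) ∈ S.indicators := by
  induction S with
  | leaf j b => simp [scope, indicators, Prod.ext_iff]
  | sum k w ch ih =>
      simp only [scope, indicators, Finset.mem_biUnion, Finset.mem_univ, true_and]
      constructor
      · rintro ⟨j, hj⟩; obtain ⟨b, hb⟩ := (ih j).mp hj; exact ⟨b, j, hb⟩
      · rintro ⟨b, j, hb⟩; exact ⟨j, (ih j).mpr ⟨b, hb⟩⟩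
  | prod k ch ih =>
      simp only [scope, indicators, Finset.mem_biUnion, Finset.mem_univ, true_and]
      constructor
      · rintro ⟨j, hj⟩; obtain ⟨b, hb⟩ := (ih j).mp hj; exact ⟨b, j, hb⟩
      · rintro ⟨b, j, hb⟩; exact ⟨j, (ih j).mpr ⟨b, hb⟩⟩

lemma card_scope_le_size (S : SPN N) : S.scope.card ≤ S.size := by
  induction S with
  | leaf i b => simp [scope, size]
  | sum k w ch ih =>
      simp only [scope, size]
      calc (Finset.univ.biUnion fun j => (ch j).scope).card
          ≤ ∑ j, (ch j).scope.card := Finset.card_biUnion_le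
        _ ≤ ∑ j, (ch j).size := Finset.sum_le_sum fun j _ => ih j
        _ ≤ 1 + k + ∑ j, (ch j).size := Nat.le_add_left _ _
  | prod k ch ih =>
      simp only [scope, size]
      calc (Finset.univ.biUnion fun j => (ch j).scope).card
          ≤ ∑ j, (ch j).scope.card := Finset.card_biUnion_le
        _ ≤ ∑ j, (ch j).size := Finset.sum_le_sum fun j _ => ih j
        _ ≤ 1 + k + ∑ j, (ch j).size := Nat.le_add_left _ _

lemma eval_eq_zero {S : SPN N} (hc : S.complete) {X : Fin N} (hX : X ∈ S.scope)
    {x : Fin N → Bool} (hb : (X, x X) ∉ S.indicators) : S.eval x = 0 := by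
  induction S with
  | leaf i b =>
      simp only [scope, Finset.mem_singleton] at hX; subst hX
      simp only [indicators, Finset.mem_singleton] at hb
      simp only [eval]
      rw [if_neg]; intro h; exact hb (by rw [h])
  | sum k w ch ih =>
      simp only [scope, Finset.mem_biUnion] at hX
      obtain ⟨j0, -, hj0⟩ := hX
      simp only [eval]
      refine Finset.sum_eq_zero fun j _ => ?_
      have hXj : X ∈ (ch j).scope := by rw [hc.1 j j0]; exact hj0
      rw [ih j (hc.2 j) hXj (fun hmem => hb (by
        simp only [indicators]
        exact Finset.mem_biUnion.mpr ⟨j, Finset.mem_univ j, hmem⟩))]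
      ring
  | prod k ch ih =>
      simp only [scope, Finset.mem_biUnion] at hX
      obtain ⟨j0, -, hj0⟩ := hX
      simp only [eval]
      exact Finset.prod_eq_zero (Finset.mem_univ j0) (ih j0 (hc j0) hj0 (fun hmem => hb (by
        simp only [indicators]
        exact Finset.mem_biUnion.mpr ⟨j0, Finset.mem_univ j0, hmem⟩)))

/-! ### `val` via sums over all assignments -/

/-- The sum of the network polynomial over all complete assignments. -/
def sumAll (S : SPN N) : ℝ := ∑ x : Fin N → Bool, S.eval x

lemma sumAll_eq (S : SPN N) :
    sumAll S = (2:ℝ) ^ (Fintype.card {i : Fin N // i ∉ S.scope}) * S.val := by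
  classical
  rw [sumAll,
    ← Equiv.sum_comp (Equiv.piEquivPiSubtypeProd (fun i => i ∈ S.scope) (fun _ => Bool)).symm
      (fun x => S.eval x), Fintype.sum_prod_type]
  have hinner : ∀ (a : {i : Fin N // i ∈ S.scope} → Bool)
      (b : {i : Fin N // ¬ i ∈ S.scope} → Bool),
      S.eval ((Equiv.piEquivPiSubtypeProd (fun i => i ∈ S.scope) (fun _ => Bool)).symm (a, b))
        = S.eval (S.extendScope a) := by
    intro a b
    apply eval_congr
    intro i hi
    simp [Equiv.piEquivPiSubtypeProd, extendScope, dif_pos hi]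
  calc (∑ a, ∑ b, S.eval ((Equiv.piEquivPiSubtypeProd (fun i => i ∈ S.scope)
          (fun _ => Bool)).symm (a, b)))
      = ∑ a, ∑ _b : {i : Fin N // ¬ i ∈ S.scope} → Bool, S.eval (S.extendScope a) := by
        exact Finset.sum_congr rfl fun a _ => Finset.sum_congr rfl fun b _ => hinner a b
    _ = ∑ a, (2:ℝ) ^ (Fintype.card {i : Fin N // i ∉ S.scope}) * S.eval (S.extendScope a) := by
        refine Finset.sum_congr rfl fun a _ => ?_
        rw [Finset.sum_const, Finset.card_univ, nsmul_eq_mul]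
        congr 1
        rw [Fintype.card_fun]
        push_cast
        simp
    _ = (2:ℝ) ^ (Fintype.card {i : Fin N // i ∉ S.scope}) * S.val := by
        rw [val, Finset.mul_sum]

lemma card_compl_scope (S : SPN N) :
    S.scope.card + Fintype.card {i : Fin N // i ∉ S.scope} = N := by
  classical
  have h1 : Fintype.card {i : Fin N // i ∈ S.scope} = S.scope.card := Fintype.card_coe _
  have h2 : Fintype.card {i : Fin N // i ∉ S.scope}
      = Fintype.card (Fin N) - Fintype.card {i : Fin N // i ∈ S.scope} :=
    Fintype.card_subtype_compl _
  have h3 : S.scope.card ≤ N := by simpa using Finset.card_le_univ S.scope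
  simp only [Fintype.card_fin] at h2
  omega

lemma val_nonneg {S : SPN N} (h : S.nonnegWeights) : 0 ≤ S.val :=
  Finset.sum_nonneg fun y _ => eval_nonneg h _

lemma eval_eq_zero_of_val {S : SPN N} (h : S.nonnegWeights) (hv : S.val = 0)
    (x : Fin N → Bool) : S.eval x = 0 := by
  have h0 : sumAll S = 0 := by rw [sumAll_eq, hv, mul_zero]
  exact (Finset.sum_eq_zero_iff_of_nonneg (fun y _ => eval_nonneg h y)).mp h0 x (Finset.mem_univ x)

lemma val_congr {S T : SPN N} (hs : S.scope = T.scope) (he : ∀ x, S.eval x = T.eval x) :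
    S.val = T.val := by
  have h1 : sumAll S = sumAll T := Finset.sum_congr rfl fun x _ => he x
  rw [sumAll_eq, sumAll_eq] at h1
  rw [hs] at h1
  exact mul_left_cancel₀ (by positivity) h1

lemma val_singleton {S : SPN N} {X : Fin N} (h : S.scope = {X}) :
    S.val = S.eval (fun _ => true) + S.eval (fun _ => false) := by
  haveI : Unique {i : Fin N // i ∈ S.scope} :=
    { default := ⟨X, h ▸ Finset.mem_singleton_self X⟩
      uniq := fun a => by
        obtain ⟨v, hv⟩ := a
        have hv' : v ∈ ({X} : Finset (Fin N)) := h ▸ hv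
        exact Subtype.ext (Finset.mem_singleton.mp hv') }
  rw [val, ← Equiv.sum_comp (Equiv.funUnique {i : Fin N // i ∈ S.scope} Bool).symm
    (fun y => S.eval (S.extendScope y)), Fintype.sum_bool]
  congr 1 <;> exact eval_congr fun i hi => by simp [extendScope, dif_pos hi]

lemma val_leaf (i : Fin N) (b : Bool) : (SPN.leaf i b).val = 1 := by
  rw [val_singleton (X := i) (by simp [scope])]
  cases b <;> simp [eval]

end SPN
namespace SPN

variable {N : ℕ}

lemma card_bool_fun : (Fintype.card (Fin N → Bool) : ℝ) = 2 ^ N := by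
  rw [Fintype.card_fun, Fintype.card_fin, Fintype.card_bool]
  push_cast
  ring

lemma sum_mul_sum_of_disjoint (F G : (Fin N → Bool) → ℝ) (s t : Finset (Fin N))
    (hst : Disjoint s t)
    (hF : ∀ x y, (∀ i ∈ s, x i = y i) → F x = F y)
    (hG : ∀ x y, (∀ i ∈ t, x i = y i) → G x = G y) :
    (∑ x : Fin N → Bool, F x) * (∑ x : Fin N → Bool, G x)
      = 2 ^ N * ∑ x : Fin N → Bool, F x * G x := by
  classical
  have hinv : ∀ p : (Fin N → Bool) × (Fin N → Bool),
      (s.piecewise (s.piecewise p.1 p.2) (s.piecewise p.2 p.1),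
       s.piecewise (s.piecewise p.2 p.1) (s.piecewise p.1 p.2)) = p := by
    intro p
    refine Prod.ext ?_ ?_ <;> funext i <;> by_cases h : i ∈ s <;>
      simp [Finset.piecewise, h]
  let e : ((Fin N → Bool) × (Fin N → Bool)) ≃ ((Fin N → Bool) × (Fin N → Bool)) :=
    { toFun := fun p => (s.piecewise p.1 p.2, s.piecewise p.2 p.1)
      invFun := fun p => (s.piecewise p.1 p.2, s.piecewise p.2 p.1)
      left_inv := hinv
      right_inv := hinv }
  have key : ∀ p : (Fin N → Bool) × (Fin N → Bool),
      F p.1 * G p.2 = F (e p).1 * G (e p).1 := by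
    intro p
    have h1 : F p.1 = F (e p).1 :=
      hF _ _ fun i hi => (Finset.piecewise_eq_of_mem _ _ _ hi).symm
    have h2 : G p.2 = G (e p).1 := by
      refine hG _ _ fun i hi => ?_
      have hns : i ∉ s := fun hmem => (Finset.disjoint_left.mp hst hmem) hi
      simp [e, Finset.piecewise_eq_of_notMem _ _ _ hns]
    rw [h1, h2]
  calc (∑ x : Fin N → Bool, F x) * (∑ x : Fin N → Bool, G x)
      = ∑ p : (Fin N → Bool) × (Fin N → Bool), F p.1 * G p.2 := by
        rw [Finset.sum_mul_sum]
        exact (Fintype.sum_prod_type (f := fun p => F p.1 * G p.2)).symm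
    _ = ∑ p : (Fin N → Bool) × (Fin N → Bool), F (e p).1 * G (e p).1 :=
        Finset.sum_congr rfl fun p _ => key p
    _ = ∑ p : (Fin N → Bool) × (Fin N → Bool), F p.1 * G p.1 :=
        Equiv.sum_comp e (fun p => F p.1 * G p.1)
    _ = ∑ a : Fin N → Bool, ∑ _b : Fin N → Bool, F a * G a :=
        Fintype.sum_prod_type (f := fun p => F p.1 * G p.1)
    _ = ∑ a : Fin N → Bool, (2:ℝ) ^ N * (F a * G a) := by
        refine Finset.sum_congr rfl fun a _ => ?_
        rw [Finset.sum_const, Finset.card_univ, nsmul_eq_mul, card_bool_fun]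
    _ = 2 ^ N * ∑ x : Fin N → Bool, F x * G x := (Finset.mul_sum _ _ _).symm

lemma sum_prod_of_disjoint :
    ∀ (k : ℕ) (g : Fin k → (Fin N → Bool) → ℝ) (s : Fin k → Finset (Fin N)),
    (∀ j x y, (∀ i ∈ s j, x i = y i) → g j x = g j y) →
    (∀ a b, a ≠ b → Disjoint (s a) (s b)) →
    ((2:ℝ) ^ N) ^ k * ∑ x : Fin N → Bool, ∏ j, g j x
      = 2 ^ N * ∏ j, ∑ x : Fin N → Bool, g j x := by
  intro k
  induction k with
  | zero =>
      intro g s _ _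
      simp only [Finset.univ_eq_empty, Finset.prod_empty, pow_zero, one_mul]
      rw [Finset.sum_const, Finset.card_univ, nsmul_eq_mul, card_bool_fun, mul_one]
  | succ n ih =>
      intro g s hdep hdisj
      have hG : ∀ x y,
          (∀ i ∈ Finset.univ.biUnion (fun j : Fin n => s j.succ), x i = y i) →
          (∏ j : Fin n, g j.succ x) = ∏ j : Fin n, g j.succ y := fun x y h =>
        Finset.prod_congr rfl fun j _ => hdep j.succ x y fun i hi =>
          h i (Finset.mem_biUnion.mpr ⟨j, Finset.mem_univ j, hi⟩)
      have hd0 : Disjoint (s 0) (Finset.univ.biUnion fun j : Fin n => s j.succ) := by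
        rw [Finset.disjoint_biUnion_right]
        intro j _
        exact hdisj 0 j.succ (Fin.succ_ne_zero j).symm
      have hpair := sum_mul_sum_of_disjoint (g 0) (fun x => ∏ j : Fin n, g j.succ x)
        (s 0) (Finset.univ.biUnion fun j : Fin n => s j.succ) hd0
        (fun x y h => hdep 0 x y h) hG
      have ihn := ih (fun j => g j.succ) (fun j => s j.succ)
        (fun j => hdep j.succ) (fun a b hab => hdisj a.succ b.succ (by simpa using hab))
      calc ((2:ℝ) ^ N) ^ (n + 1) * ∑ x : Fin N → Bool, ∏ j : Fin (n+1), g j x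
          = ((2:ℝ) ^ N) ^ n * ((2:ℝ) ^ N *
              ∑ x : Fin N → Bool, g 0 x * ∏ j : Fin n, g j.succ x) := by
            simp only [Fin.prod_univ_succ]
            ring
        _ = ((2:ℝ) ^ N) ^ n * ((∑ x : Fin N → Bool, g 0 x) *
              ∑ x : Fin N → Bool, ∏ j : Fin n, g j.succ x) := by rw [← hpair]
        _ = (∑ x : Fin N → Bool, g 0 x) *
              (((2:ℝ) ^ N) ^ n * ∑ x : Fin N → Bool, ∏ j : Fin n, g j.succ x) := by ring
        _ = (∑ x : Fin N → Bool, g 0 x) *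
              ((2:ℝ) ^ N * ∏ j : Fin n, ∑ x : Fin N → Bool, g j.succ x) := by rw [ihn]
        _ = 2 ^ N * ∏ j : Fin (n+1), ∑ x : Fin N → Bool, g j x := by
            rw [Fin.prod_univ_succ]
            ring

lemma val_prod {k : ℕ} (ch : Fin k → SPN N)
    (hd : ∀ a b, a ≠ b → Disjoint (scope (ch a)) (scope (ch b))) :
    (SPN.prod k ch).val = ∏ j, (ch j).val := by
  classical
  have key := sum_prod_of_disjoint k (fun j => (ch j).eval) (fun j => (ch j).scope)
    (fun j x y h => eval_congr h) hd
  have e1 : sumAll (SPN.prod k ch) = ∑ x : Fin N → Bool, ∏ j, (ch j).eval x := by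
    simp only [sumAll, eval]
  rw [← e1] at key
  rw [sumAll_eq] at key
  have e2 : ∀ j, (∑ x : Fin N → Bool, (ch j).eval x)
      = (2:ℝ) ^ (Fintype.card {i : Fin N // i ∉ (ch j).scope}) * (ch j).val := fun j =>
    sumAll_eq (ch j)
  simp only [e2] at key
  set m := Fintype.card {i : Fin N // i ∉ (SPN.prod k ch).scope} with hm
  have hcard : (SPN.prod k ch).scope.card = ∑ j, (ch j).scope.card := by
    simp only [scope]
    exact Finset.card_biUnion fun a _ b _ hab => hd a b hab
  have hexp : k * N + m = N + ∑ j, Fintype.card {i : Fin N // i ∉ (ch j).scope} := by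
    have h1 := card_compl_scope (SPN.prod k ch)
    have h2 : ∀ j, (ch j).scope.card + Fintype.card {i : Fin N // i ∉ (ch j).scope} = N :=
      fun j => card_compl_scope (ch j)
    have h3 : ∑ j, ((ch j).scope.card + Fintype.card {i : Fin N // i ∉ (ch j).scope})
        = ∑ _j : Fin k, N := Finset.sum_congr rfl fun j _ => h2 j
    rw [Finset.sum_add_distrib, Finset.sum_const, Finset.card_univ, Fintype.card_fin,
      smul_eq_mul] at h3
    omega
  have key2 : (2:ℝ) ^ (k * N + m) * (SPN.prod k ch).val
      = (2:ℝ) ^ (N + ∑ j, Fintype.card {i : Fin N // i ∉ (ch j).scope}) * ∏ j, (ch j).val := by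
    calc (2:ℝ) ^ (k * N + m) * (SPN.prod k ch).val
        = ((2:ℝ) ^ N) ^ k * ((2:ℝ) ^ m * (SPN.prod k ch).val) := by
          rw [pow_add, ← pow_mul]
          ring_nf
      _ = 2 ^ N * ∏ j, ((2:ℝ) ^ (Fintype.card {i : Fin N // i ∉ (ch j).scope}) * (ch j).val) :=
          key
      _ = 2 ^ N * ((∏ j, (2:ℝ) ^ (Fintype.card {i : Fin N // i ∉ (ch j).scope}))
            * ∏ j, (ch j).val) := by rw [Finset.prod_mul_distrib]
      _ = (2:ℝ) ^ (N + ∑ j, Fintype.card {i : Fin N // i ∉ (ch j).scope})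
            * ∏ j, (ch j).val := by
          rw [Finset.prod_pow_eq_pow_sum, pow_add]
          ring
  rw [hexp] at key2
  exact mul_left_cancel₀ (by positivity) key2

lemma val_sum {k : ℕ} (w : Fin k → ℝ) (ch : Fin k → SPN N)
    (hs : ∀ j, scope (ch j) = scope (SPN.sum k w ch)) :
    (SPN.sum k w ch).val = ∑ j, w j * (ch j).val := by
  have e1 : sumAll (SPN.sum k w ch) = ∑ j, w j * sumAll (ch j) := by
    simp only [sumAll, eval]
    rw [Finset.sum_comm]
    exact Finset.sum_congr rfl fun j _ => by rw [Finset.mul_sum]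
  rw [sumAll_eq] at e1
  have e2 : ∀ j, sumAll (ch j)
      = (2:ℝ) ^ (Fintype.card {i : Fin N // i ∉ (SPN.sum k w ch).scope}) * (ch j).val := by
    intro j
    rw [sumAll_eq]
    congr 2
    rw [hs j]
  simp only [e2] at e1
  have e3 : (2:ℝ) ^ (Fintype.card {i : Fin N // i ∉ (SPN.sum k w ch).scope})
      * (SPN.sum k w ch).val
      = (2:ℝ) ^ (Fintype.card {i : Fin N // i ∉ (SPN.sum k w ch).scope})
      * ∑ j, w j * (ch j).val := by
    rw [e1, Finset.mul_sum]
    exact Finset.sum_congr rfl fun j _ => by ring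
  exact mul_left_cancel₀ (by positivity) e3

end SPN
namespace SPN

variable {N : ℕ}

/-! ### Gadgets -/

/-- The constant-1 SPN: an empty product. -/
def const1 : SPN N := .prod 0 Fin.elim0

lemma eval_const1 (x : Fin N → Bool) : (const1 : SPN N).eval x = 1 := by
  simp [const1, eval]

lemma scope_const1 : (const1 : SPN N).scope = ∅ := by
  simp [const1, scope]

lemma size_const1 : (const1 : SPN N).size = 1 := by
  simp [const1, size]

lemma complete_const1 : (const1 : SPN N).complete := fun j => j.elim0

lemma decomposable_const1 : (const1 : SPN N).decomposable :=
  ⟨fun i => i.elim0, fun j => j.elim0⟩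

lemma weightNormalized_const1 : (const1 : SPN N).weightNormalized := fun j => j.elim0

lemma normal3_const1 : (const1 : SPN N).normal3 := fun j => j.elim0

lemma val_const1 : (const1 : SPN N).val = 1 := by
  have h := sumAll_eq (const1 : SPN N)
  have h2 : sumAll (const1 : SPN N) = (2:ℝ) ^ N := by
    rw [sumAll]
    simp only [eval_const1]
    rw [Finset.sum_const, Finset.card_univ, nsmul_eq_mul, card_bool_fun, mul_one]
  have h3 : Fintype.card {i : Fin N // i ∉ (const1 : SPN N).scope} = N := by
    have hall : ∀ i : Fin N, i ∉ (const1 : SPN N).scope := by simp [scope_const1]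
    rw [Fintype.card_congr (Equiv.subtypeUnivEquiv hall), Fintype.card_fin]
  rw [h2, h3] at h
  have h4 : (2:ℝ) ^ N * 1 = (2:ℝ) ^ N * (const1 : SPN N).val := by rw [mul_one]; exact h
  exact (mul_left_cancel₀ (by positivity) h4).symm

/-- A generic two-leaf mixture over one variable. -/
def stump2 (i : Fin N) (a b : ℝ) : SPN N :=
  .sum 2 (fun j => if j = 0 then a else b)
    (fun j => if j = 0 then .leaf i true else .leaf i false)

lemma eval_stump2 (i : Fin N) (a b : ℝ) (x : Fin N → Bool) :
    (stump2 i a b).eval x = if x i then a else b := by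
  simp only [stump2, eval, Fin.sum_univ_two]
  norm_num
  cases h : x i <;> simp [eval, h]

lemma scope_stump2 (i : Fin N) (a b : ℝ) : (stump2 i a b).scope = {i} := by
  ext y
  simp [stump2, scope, Fin.exists_fin_two]

lemma size_stump2 (i : Fin N) (a b : ℝ) : (stump2 i a b).size = 5 := by
  simp [stump2, size, Fin.sum_univ_two]

lemma complete_stump2 (i : Fin N) (a b : ℝ) : (stump2 i a b).complete := by
  refine ⟨fun m n => ?_, fun j => ?_⟩
  · fin_cases m <;> fin_cases n <;> simp [scope]
  · fin_cases j <;> simp [complete]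

lemma decomposable_stump2 (i : Fin N) (a b : ℝ) : (stump2 i a b).decomposable := by
  intro j
  fin_cases j <;> simp [decomposable]

lemma weightNormalized_stump2 (i : Fin N) {a b : ℝ} (ha : 0 ≤ a) (hb : 0 ≤ b)
    (hab : a + b = 1) : (stump2 i a b).weightNormalized := by
  refine ⟨fun j => ?_, ?_, fun j => ?_⟩
  · fin_cases j <;> simpa
  · simpa [Fin.sum_univ_two]
  · fin_cases j <;> simp [weightNormalized]

lemma isStump_stump2 (i : Fin N) {a b : ℝ} (ha : 0 ≤ a) (hb : 0 ≤ b)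
    (hab : a + b = 1) : (stump2 i a b).isStump := by
  refine ⟨⟨i, ?_, ?_⟩, by simpa, by simpa, by simpa⟩ <;> simp

lemma normal3_stump2 (i : Fin N) {a b : ℝ} (ha : 0 ≤ a) (hb : 0 ≤ b)
    (hab : a + b = 1) : (stump2 i a b).normal3 :=
  Or.inl (isStump_stump2 i ha hb hab)

/-- A deterministic stump representing the indicator `I[X_i = b]`. -/
def detStump (i : Fin N) (b : Bool) : SPN N :=
  stump2 i (if b then 1 else 0) (if b then 0 else 1)

lemma eval_detStump (i : Fin N) (b : Bool) (x : Fin N → Bool) :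
    (detStump i b).eval x = if x i = b then 1 else 0 := by
  rw [detStump, eval_stump2]
  cases b <;> cases h : x i <;> simp

lemma scope_detStump (i : Fin N) (b : Bool) : (detStump i b).scope = {i} :=
  scope_stump2 _ _ _

lemma size_detStump (i : Fin N) (b : Bool) : (detStump i b).size = 5 := size_stump2 _ _ _

lemma normal_parts_detStump (i : Fin N) (b : Bool) :
    (detStump i b).complete ∧ (detStump i b).decomposable ∧
      (detStump i b).weightNormalized ∧ (detStump i b).normal3 := by
  refine ⟨complete_stump2 _ _ _, decomposable_stump2 _ _ _, ?_, ?_⟩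
  · exact weightNormalized_stump2 _ (by cases b <;> norm_num) (by cases b <;> norm_num)
      (by cases b <;> norm_num)
  · exact normal3_stump2 _ (by cases b <;> norm_num) (by cases b <;> norm_num)
      (by cases b <;> norm_num)

/-- A uniform distribution over the variables in `s`, as a product of stumps. -/
def uniformOn (s : Finset (Fin N)) : SPN N :=
  .prod s.toList.length fun m => stump2 (s.toList.get m) (1/2) (1/2)

lemma scope_uniformOn (s : Finset (Fin N)) : (uniformOn s).scope = s := by
  have h0 : (uniformOn s).scope
      = Finset.univ.biUnion fun m : Fin s.toList.length =>
          (stump2 (s.toList.get m) (1/2 : ℝ) (1/2)).scope := rfl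
  rw [h0]
  simp only [scope_stump2]
  ext i
  simp only [Finset.mem_biUnion, Finset.mem_univ, true_and, Finset.mem_singleton]
  constructor
  · rintro ⟨m, hm⟩
    subst hm
    exact Finset.mem_toList.mp (by simpa using s.toList.get_mem m.1 m.2)
  · intro hi
    obtain ⟨m, hm⟩ := List.mem_iff_get.mp (Finset.mem_toList.mpr hi)
    exact ⟨m, hm.symm⟩

lemma size_uniformOn (s : Finset (Fin N)) : (uniformOn s).size = 1 + 6 * s.card := by
  have h0 : (uniformOn s).size
      = 1 + s.toList.length + ∑ m : Fin s.toList.length,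
          (stump2 (s.toList.get m) (1/2 : ℝ) (1/2)).size := rfl
  rw [h0]
  simp only [size_stump2]
  rw [Finset.sum_const, Finset.card_univ, Fintype.card_fin, Finset.length_toList,
    smul_eq_mul]
  ring

lemma normal_parts_uniformOn (s : Finset (Fin N)) :
    (uniformOn s).complete ∧ (uniformOn s).decomposable ∧
      (uniformOn s).weightNormalized ∧ (uniformOn s).normal3 := by
  refine ⟨fun m => complete_stump2 _ _ _, ⟨?_, fun m => decomposable_stump2 _ _ _⟩,
    fun m => weightNormalized_stump2 _ (by norm_num) (by norm_num) (by norm_num),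
    fun m => normal3_stump2 _ (by norm_num) (by norm_num) (by norm_num)⟩
  intro a b hab
  simp only [scope_stump2, Finset.disjoint_singleton]
  intro h
  exact hab ((List.nodup_iff_injective_get.mp s.nodup_toList) h)

end SPN
namespace SPN

variable {N : ℕ}

/-! ### Substitution of indicators by constant 1 -/

/-- Replace every leaf indicator in `A` by the constant-1 SPN. -/
def subst (A : Finset (Fin N × Bool)) : SPN N → SPN N
  | .leaf i b => if (i, b) ∈ A then const1 else .leaf i b
  | .sum k w ch => .sum k w fun j => subst A (ch j)
  | .prod k ch => .prod k fun j => subst A (ch j)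

/-- Compatibility of a substitution set with an SPN: if one polarity of a variable
is substituted but the opposite polarity occurs, the opposite is substituted too. -/
def compat (A : Finset (Fin N × Bool)) (S : SPN N) : Prop :=
  ∀ i b, (i, b) ∈ A → (i, !b) ∈ S.indicators → (i, !b) ∈ A

lemma compat_empty (S : SPN N) : compat ∅ S := fun i b h => by simp at h

lemma subst_empty (S : SPN N) : subst ∅ S = S := by
  induction S with
  | leaf i b => simp [subst]
  | sum k w ch ih => simp only [subst]; congr 1; funext j; exact ih j
  | prod k ch ih => simp only [subst]; congr 1; funext j; exact ih j

lemma subst_const1 (B : Finset (Fin N × Bool)) : subst B (const1 : SPN N) = const1 := by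
  rw [const1]
  simp only [subst]
  congr 1
  funext j
  exact j.elim0

lemma subst_union (A B : Finset (Fin N × Bool)) (S : SPN N) :
    subst (A ∪ B) S = subst B (subst A S) := by
  induction S with
  | leaf i b =>
      by_cases hA : (i, b) ∈ A
      · rw [subst, if_pos (Finset.mem_union_left _ hA), subst, if_pos hA, subst_const1]
      · by_cases hB : (i, b) ∈ B <;> simp [subst, hA, hB, Finset.mem_union]
  | sum k w ch ih => simp only [subst]; congr 1; funext j; exact ih j
  | prod k ch ih => simp only [subst]; congr 1; funext j; exact ih j

lemma indicators_subst (A : Finset (Fin N × Bool)) (S : SPN N) :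
    (subst A S).indicators = S.indicators \ A := by
  induction S with
  | leaf i b =>
      by_cases hA : (i, b) ∈ A
      · simp [subst, hA, const1, indicators]
        exact (Finset.sdiff_eq_empty_iff_subset.mpr (by simp [hA])).symm
      · simp only [subst, if_neg hA, indicators]
        ext p
        simp only [Finset.mem_singleton, Finset.mem_sdiff]
        constructor
        · rintro rfl; exact ⟨rfl, hA⟩
        · rintro ⟨rfl, -⟩; rfl
  | sum k w ch ih =>
      simp only [subst, indicators, ih]
      ext p
      simp only [Finset.mem_biUnion, Finset.mem_univ, true_and, Finset.mem_sdiff]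
      tauto
  | prod k ch ih =>
      simp only [subst, indicators, ih]
      ext p
      simp only [Finset.mem_biUnion, Finset.mem_univ, true_and, Finset.mem_sdiff]
      tauto

lemma indicators_subst_subset (A : Finset (Fin N × Bool)) (S : SPN N) :
    (subst A S).indicators ⊆ S.indicators := by
  rw [indicators_subst]; exact Finset.sdiff_subset

lemma scope_subst_subset (A : Finset (Fin N × Bool)) (S : SPN N) :
    (subst A S).scope ⊆ S.scope := by
  intro i hi
  obtain ⟨b, hb⟩ := mem_scope_iff.mp hi
  exact mem_scope_iff.mpr ⟨b, indicators_subst_subset A S hb⟩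

lemma scope_subst (A : Finset (Fin N × Bool)) (S : SPN N) (hc : compat A S) :
    (subst A S).scope = S.scope \ A.image Prod.fst := by
  ext i
  simp only [Finset.mem_sdiff, Finset.mem_image]
  rw [mem_scope_iff, mem_scope_iff (S := S)]
  simp only [indicators_subst, Finset.mem_sdiff]
  constructor
  · rintro ⟨b, hb, hbA⟩
    refine ⟨⟨b, hb⟩, ?_⟩
    rintro ⟨⟨j, c⟩, hjc, rfl⟩
    by_cases hcb : c = b
    · exact hbA (hcb ▸ hjc)
    · have hbc : b = !c := by cases b <;> cases c <;> simp_all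
      exact hbA (by rw [hbc]; exact hc j c hjc (by rw [← hbc]; exact hb))
  · rintro ⟨⟨b, hb⟩, hnA⟩
    exact ⟨b, hb, fun hbA => hnA ⟨(i, b), hbA, rfl⟩⟩

lemma eval_subst_of_agree (A : Finset (Fin N × Bool)) (S : SPN N)
    {x : Fin N → Bool} (h : ∀ p ∈ A, x p.1 = p.2) :
    (subst A S).eval x = S.eval x := by
  induction S with
  | leaf i b =>
      by_cases hA : (i, b) ∈ A
      · rw [subst, if_pos hA, eval_const1]
        have := h (i, b) hA
        simp only [eval]
        rw [if_pos this]
      · rw [subst, if_neg hA]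
  | sum k w ch ih =>
      simp only [subst, eval]
      exact Finset.sum_congr rfl fun j _ => by rw [ih j]
  | prod k ch ih =>
      simp only [subst, eval]
      exact Finset.prod_congr rfl fun j _ => by rw [ih j]

lemma nonnegWeights_subst (A : Finset (Fin N × Bool)) {S : SPN N} (h : S.nonnegWeights) :
    (subst A S).nonnegWeights := by
  induction S with
  | leaf i b =>
      by_cases hA : (i, b) ∈ A
      · rw [subst, if_pos hA]; intro j; exact j.elim0
      · rw [subst, if_neg hA]; trivial
  | sum k w ch ih => exact ⟨h.1, fun j => ih j (h.2 j)⟩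
  | prod k ch ih => exact fun j => ih j (h j)

lemma complete_subst (A : Finset (Fin N × Bool)) {S : SPN N} (hS : S.complete)
    (hc : compat A S) : (subst A S).complete := by
  induction S with
  | leaf i b =>
      by_cases hA : (i, b) ∈ A
      · rw [subst, if_pos hA]; exact complete_const1
      · rw [subst, if_neg hA]; trivial
  | sum k w ch ih =>
      have hcj : ∀ j, compat A (ch j) := fun j i b hb hmem =>
        hc i b hb (by
          simp only [indicators]
          exact Finset.mem_biUnion.mpr ⟨j, Finset.mem_univ j, hmem⟩)
      refine ⟨fun a b => ?_, fun j => ih j (hS.2 j) (hcj j)⟩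
      rw [scope_subst _ _ (hcj a), scope_subst _ _ (hcj b), hS.1 a b]
  | prod k ch ih =>
      have hcj : ∀ j, compat A (ch j) := fun j i b hb hmem =>
        hc i b hb (by
          simp only [indicators]
          exact Finset.mem_biUnion.mpr ⟨j, Finset.mem_univ j, hmem⟩)
      exact fun j => ih j (hS j) (hcj j)

lemma compat_child_sum {A : Finset (Fin N × Bool)} {k : ℕ} {w : Fin k → ℝ}
    {ch : Fin k → SPN N} (hc : compat A (SPN.sum k w ch)) (j : Fin k) :
    compat A (ch j) := fun i b hb hmem =>
  hc i b hb (by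
    simp only [indicators]
    exact Finset.mem_biUnion.mpr ⟨j, Finset.mem_univ j, hmem⟩)

lemma compat_child_prod {A : Finset (Fin N × Bool)} {k : ℕ}
    {ch : Fin k → SPN N} (hc : compat A (SPN.prod k ch)) (j : Fin k) :
    compat A (ch j) := fun i b hb hmem =>
  hc i b hb (by
    simp only [indicators]
    exact Finset.mem_biUnion.mpr ⟨j, Finset.mem_univ j, hmem⟩)

end SPN
namespace SPN

variable {N : ℕ}

/-! ### Shared indicators of a product node -/

/-- The indicators of variables shared between distinct (substituted) children. -/
def sharedTb (A : Finset (Fin N × Bool)) {k : ℕ} (ch : Fin k → SPN N) :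
    Finset (Fin N × Bool) :=
  (Finset.univ.biUnion fun j => (subst A (ch j)).indicators).filter fun p =>
    ∃ a b : Fin k, a ≠ b ∧ p.1 ∈ (subst A (ch a)).scope ∧ p.1 ∈ (subst A (ch b)).scope

section Shared

variable {A : Finset (Fin N × Bool)} {k : ℕ} {ch : Fin k → SPN N}

/-- The pairwise consistency condition of a product node. -/
def pairCons (ch : Fin k → SPN N) : Prop :=
  ∀ a b X, a ≠ b → (X, true) ∈ (ch a).indicators → (X, false) ∈ (ch b).indicators → False

lemma cons1 (hp : pairCons ch) {X : Fin N} {b : Bool} {a c : Fin k}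
    (ha : (X, b) ∈ (subst A (ch a)).indicators)
    (hc : (X, !b) ∈ (subst A (ch c)).indicators) : a = c := by
  by_contra h
  cases b with
  | true => exact hp a c X h (indicators_subst_subset _ _ ha) (indicators_subst_subset _ _ hc)
  | false =>
      exact hp c a X (Ne.symm h) (indicators_subst_subset _ _ hc)
        (indicators_subst_subset _ _ ha)

lemma sharedTb_uniq (hp : pairCons ch) {X : Fin N} {b : Bool}
    (hmem : (X, b) ∈ sharedTb A ch) {j : Fin k} {b' : Bool}
    (h : (X, b') ∈ (subst A (ch j)).indicators) : b' = b := by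
  rw [sharedTb, Finset.mem_filter] at hmem
  obtain ⟨hmem0, a, c, hac, hXa, hXc⟩ := hmem
  obtain ⟨m0, -, hm0⟩ := Finset.mem_biUnion.mp hmem0
  by_contra hne
  have hb' : b' = !b := by cases b <;> cases b' <;> simp_all
  subst hb'
  have hm0j : m0 = j := cons1 hp hm0 h
  subst hm0j
  -- pick a sharing child different from m0
  have hd : ∃ d : Fin k, d ≠ m0 ∧ X ∈ (subst A (ch d)).scope := by
    by_cases ham : a = m0
    · exact ⟨c, fun hcm => hac (ham.trans hcm.symm), hXc⟩
    · exact ⟨a, ham, hXa⟩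
  obtain ⟨d, hdm, hXd⟩ := hd
  obtain ⟨c'', hc''⟩ := mem_scope_iff.mp hXd
  by_cases hcb : c'' = b
  · exact hdm (cons1 hp (hcb ▸ hc'') h)
  · have : c'' = !b := by cases b <;> cases c'' <;> simp_all
    exact hdm (cons1 hp hm0 (this ▸ hc'')).symm

lemma sharedTb_fst_inj (hp : pairCons ch) {p q : Fin N × Bool}
    (hP : p ∈ sharedTb A ch) (hq : q ∈ sharedTb A ch) (h1 : p.1 = q.1) : p = q := by
  obtain ⟨X, b⟩ := p
  obtain ⟨Y, c⟩ := q
  simp only at h1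
  subst h1
  have hq0 : (X, c) ∈ Finset.univ.biUnion fun j => (subst A (ch j)).indicators :=
    (Finset.mem_filter.mp hq).1
  obtain ⟨m, -, hm⟩ := Finset.mem_biUnion.mp hq0
  have := sharedTb_uniq hp hP hm
  simp [this]

lemma card_sharedTb_le (hp : pairCons ch) :
    (sharedTb A ch).card ≤ (SPN.prod k ch).scope.card := by
  have h1 : (sharedTb A ch).card = ((sharedTb A ch).image Prod.fst).card :=
    (Finset.card_image_of_injOn fun p hP q hq h => sharedTb_fst_inj hp hP hq h).symm
  rw [h1]
  apply Finset.card_le_card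
  intro X hX
  obtain ⟨p, hP, rfl⟩ := Finset.mem_image.mp hX
  have hp0 := (Finset.mem_filter.mp hP).1
  obtain ⟨m, -, hm⟩ := Finset.mem_biUnion.mp hp0
  have h2 : p.1 ∈ (subst A (ch m)).scope := mem_scope_iff.mpr ⟨p.2, hm⟩
  have h3 : p.1 ∈ (ch m).scope := scope_subst_subset A (ch m) h2
  simp only [scope]
  exact Finset.mem_biUnion.mpr ⟨m, Finset.mem_univ m, h3⟩

lemma shared_mem_image {a b : Fin k} {X : Fin N} (hab : a ≠ b)
    (ha : X ∈ (subst A (ch a)).scope) (hb : X ∈ (subst A (ch b)).scope) :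
    X ∈ (sharedTb A ch).image Prod.fst := by
  obtain ⟨c, hc⟩ := mem_scope_iff.mp ha
  refine Finset.mem_image.mpr ⟨(X, c), Finset.mem_filter.mpr ⟨?_, a, b, hab, ha, hb⟩, rfl⟩
  exact Finset.mem_biUnion.mpr ⟨a, Finset.mem_univ a, hc⟩

lemma compat_sharedTb (hp : pairCons ch) (j : Fin k) :
    compat (sharedTb A ch) (subst A (ch j)) := by
  intro i b hib hmem
  have := sharedTb_uniq hp hib hmem
  simp at this

lemma compat_union_sharedTb (hp : pairCons ch)
    (hcA : compat A (SPN.prod k ch)) (j : Fin k) :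
    compat (A ∪ sharedTb A ch) (ch j) := by
  intro i b hib hmem
  rcases Finset.mem_union.mp hib with hA | hT
  · refine Finset.mem_union_left _ (hcA i b hA ?_)
    simp only [indicators]
    exact Finset.mem_biUnion.mpr ⟨j, Finset.mem_univ j, hmem⟩
  · by_cases hbA : (i, !b) ∈ A
    · exact Finset.mem_union_left _ hbA
    · exfalso
      have hmem' : (i, !b) ∈ (subst A (ch j)).indicators := by
        rw [indicators_subst]
        exact Finset.mem_sdiff.mpr ⟨hmem, hbA⟩
      have := sharedTb_uniq hp hT hmem'
      simp at this

lemma scope_subst_union_sharedTb (hp : pairCons ch) (j : Fin k) :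
    (subst (A ∪ sharedTb A ch) (ch j)).scope
      = (subst A (ch j)).scope \ (sharedTb A ch).image Prod.fst := by
  rw [subst_union, scope_subst _ _ (compat_sharedTb hp j)]

end Shared

/-! ### The normalization function -/

open scoped Classical in
/-- Normalization of a complete and consistent SPN, relative to a substitution set. -/
def norm (A : Finset (Fin N × Bool)) : SPN N → SPN N
  | .leaf i b => if (i, b) ∈ A then const1 else detStump i b
  | .sum k w ch =>
      if hX : ∃ X, (subst A (.sum k w ch)).scope = {X} then
        stump2 hX.choose
          ((subst A (.sum k w ch)).eval (fun _ => true) / (subst A (.sum k w ch)).val)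
          ((subst A (.sum k w ch)).eval (fun _ => false) / (subst A (.sum k w ch)).val)
      else if 2 ≤ (subst A (.sum k w ch)).scope.card then
        .sum k
          (fun j => if 0 < (subst A (ch j)).val
            then w j * (subst A (ch j)).val / (subst A (.sum k w ch)).val else 0)
          (fun j => if 0 < (subst A (ch j)).val
            then norm A (ch j) else uniformOn (subst A (.sum k w ch)).scope)
      else const1
  | .prod k ch =>
      .prod 2 (fun j => if j = 0 then
          .prod (sharedTb A ch).toList.length
            (fun m => detStump ((sharedTb A ch).toList.get m).1
              ((sharedTb A ch).toList.get m).2)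
        else .prod k (fun j => norm (A ∪ sharedTb A ch) (ch j)))

end SPN
namespace SPN

variable {N : ℕ}

/-! ### Small structural helpers -/

lemma eval_sum_def {k : ℕ} (w : Fin k → ℝ) (ch : Fin k → SPN N) (x : Fin N → Bool) :
    (SPN.sum k w ch).eval x = ∑ j, w j * (ch j).eval x := rfl

lemma eval_prod_def {k : ℕ} (ch : Fin k → SPN N) (x : Fin N → Bool) :
    (SPN.prod k ch).eval x = ∏ j, (ch j).eval x := rfl

lemma scope_sum_def {k : ℕ} (w : Fin k → ℝ) (ch : Fin k → SPN N) :
    (SPN.sum k w ch).scope = Finset.univ.biUnion fun j => (ch j).scope := rfl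

lemma scope_prod_def {k : ℕ} (ch : Fin k → SPN N) :
    (SPN.prod k ch).scope = Finset.univ.biUnion fun j => (ch j).scope := rfl

lemma size_sum_def {k : ℕ} (w : Fin k → ℝ) (ch : Fin k → SPN N) :
    (SPN.sum k w ch).size = 1 + k + ∑ j, (ch j).size := rfl

lemma size_prod_def {k : ℕ} (ch : Fin k → SPN N) :
    (SPN.prod k ch).size = 1 + k + ∑ j, (ch j).size := rfl

lemma subst_sum_def (A : Finset (Fin N × Bool)) {k : ℕ} (w : Fin k → ℝ) (ch : Fin k → SPN N) :
    subst A (SPN.sum k w ch) = SPN.sum k w fun j => subst A (ch j) := rfl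

lemma subst_prod_def (A : Finset (Fin N × Bool)) {k : ℕ} (ch : Fin k → SPN N) :
    subst A (SPN.prod k ch) = SPN.prod k fun j => subst A (ch j) := rfl

lemma prod2_eval (a b : SPN N) (x : Fin N → Bool) :
    (SPN.prod 2 fun t => if t = 0 then a else b).eval x = a.eval x * b.eval x := by
  rw [eval_prod_def, Fin.prod_univ_two]
  norm_num

lemma prod2_scope (a b : SPN N) :
    (SPN.prod 2 fun t => if t = 0 then a else b).scope = a.scope ∪ b.scope := by
  rw [scope_prod_def]
  ext i
  simp [Fin.exists_fin_two]

lemma prod2_size (a b : SPN N) :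
    (SPN.prod 2 fun t => if t = 0 then a else b).size = 3 + a.size + b.size := by
  rw [size_prod_def, Fin.sum_univ_two]
  norm_num
  ring

lemma sum_sq_le {k : ℕ} (a : Fin k → ℕ) : ∑ j, a j ^ 2 ≤ (∑ j, a j) ^ 2 := by
  calc ∑ j, a j ^ 2 ≤ ∑ j, a j * ∑ i, a i := Finset.sum_le_sum fun j _ => by
        rw [pow_two]
        exact Nat.mul_le_mul_left _ (Finset.single_le_sum (f := a)
          (fun _ _ => Nat.zero_le _) (Finset.mem_univ j))
    _ = (∑ j, a j) ^ 2 := by rw [← Finset.sum_mul, pow_two]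


lemma eval_leaf_def (i : Fin N) (b : Bool) (x : Fin N → Bool) :
    (SPN.leaf i b).eval x = if x i = b then 1 else 0 := rfl

lemma scope_leaf_def (i : Fin N) (b : Bool) : (SPN.leaf i b).scope = {i} := rfl

lemma prodk_parts {k : ℕ} {f : Fin k → SPN N}
    (h : ∀ j, (f j).complete ∧ (f j).decomposable ∧ (f j).weightNormalized ∧ (f j).normal3)
    (hd : ∀ a b, a ≠ b → Disjoint (f a).scope (f b).scope) :
    (SPN.prod k f).complete ∧ (SPN.prod k f).decomposable ∧
      (SPN.prod k f).weightNormalized ∧ (SPN.prod k f).normal3 :=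
  ⟨fun j => (h j).1, ⟨hd, fun j => (h j).2.1⟩, fun j => (h j).2.2.1, fun j => (h j).2.2.2⟩

lemma prod2_parts {a b : SPN N}
    (ha : a.complete ∧ a.decomposable ∧ a.weightNormalized ∧ a.normal3)
    (hb : b.complete ∧ b.decomposable ∧ b.weightNormalized ∧ b.normal3)
    (hd : Disjoint a.scope b.scope) :
    (SPN.prod 2 fun t => if t = 0 then a else b).complete ∧
      (SPN.prod 2 fun t => if t = 0 then a else b).decomposable ∧
      (SPN.prod 2 fun t => if t = 0 then a else b).weightNormalized ∧
      (SPN.prod 2 fun t => if t = 0 then a else b).normal3 := by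
  apply prodk_parts
  · intro t
    by_cases ht : t = 0
    · simp only [if_pos ht]; exact ha
    · simp only [if_neg ht]; exact hb
  · intro s t hst
    fin_cases s <;> fin_cases t
    · exact absurd rfl hst
    · simpa using hd
    · simpa using hd.symm
    · exact absurd rfl hst

end SPN
namespace SPN

variable {N : ℕ}

set_option maxHeartbeats 2000000 in
theorem norm_spec (S : SPN N) : ∀ (A : Finset (Fin N × Bool)),
    S.complete → S.consistent → S.nonnegWeights → compat A S → 0 < (subst A S).val →
    ((norm A S).complete ∧ (norm A S).decomposable ∧ (norm A S).weightNormalized ∧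
      (norm A S).normal3)
    ∧ (norm A S).scope = (subst A S).scope
    ∧ (∀ x, (norm A S).eval x = (subst A S).eval x / (subst A S).val)
    ∧ (norm A S).size ≤ 7 * S.size ^ 2 := by
  induction S with
  | leaf i b =>
      intro A _ _ _ hcA hval
      by_cases hA : (i, b) ∈ A
      · have hn : norm A (SPN.leaf i b) = const1 := by rw [norm, if_pos hA]
        have hsu : subst A (SPN.leaf i b) = const1 := by rw [subst, if_pos hA]
        rw [hn, hsu]
        refine ⟨⟨complete_const1, decomposable_const1, weightNormalized_const1,
          normal3_const1⟩, rfl, fun x => ?_, ?_⟩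
        · simp [eval_const1, val_const1]
        · rw [size_const1]; simp [size]
      · have hn : norm A (SPN.leaf i b) = detStump i b := by rw [norm, if_neg hA]
        have hsu : subst A (SPN.leaf i b) = SPN.leaf i b := by rw [subst, if_neg hA]
        rw [hn, hsu]
        refine ⟨normal_parts_detStump i b, scope_detStump i b, fun x => ?_, ?_⟩
        · rw [eval_detStump, val_leaf, div_one]; rfl
        · rw [size_detStump]; simp [size]
  | sum k w ch ih =>
      intro A hcomp hcons hnn hcA hval
      have hnnS : (subst A (SPN.sum k w ch)).nonnegWeights := nonnegWeights_subst A hnn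
      have hcsub : (subst A (SPN.sum k w ch)).complete := complete_subst A hcomp hcA
      have hscope_j : ∀ j, (subst A (ch j)).scope = (subst A (SPN.sum k w ch)).scope := by
        intro j
        ext i
        rw [subst_sum_def, scope_sum_def]
        simp only [Finset.mem_biUnion, Finset.mem_univ, true_and]
        constructor
        · intro hi; exact ⟨j, hi⟩
        · rintro ⟨j', hi⟩
          have heq := hcsub.1 j' j
          rwa [heq] at hi
      have hvalsum : (subst A (SPN.sum k w ch)).val = ∑ j, w j * (subst A (ch j)).val := by
        rw [subst_sum_def]
        exact val_sum w _ fun j => by rw [← subst_sum_def]; exact hscope_j j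
      by_cases hX : ∃ X, (subst A (SPN.sum k w ch)).scope = {X}
      · -- singleton-scope sum node: replace by a stump
        have hn : norm A (SPN.sum k w ch) = stump2 hX.choose
            ((subst A (SPN.sum k w ch)).eval (fun _ => true) / (subst A (SPN.sum k w ch)).val)
            ((subst A (SPN.sum k w ch)).eval (fun _ => false) / (subst A (SPN.sum k w ch)).val) := by
          rw [norm, dif_pos hX]
        have hs := hX.choose_spec
        have hpq : (subst A (SPN.sum k w ch)).val
            = (subst A (SPN.sum k w ch)).eval (fun _ => true)
              + (subst A (SPN.sum k w ch)).eval (fun _ => false) := val_singleton hs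
        have hp0 : 0 ≤ (subst A (SPN.sum k w ch)).eval (fun _ => true) := eval_nonneg hnnS _
        have hq0 : 0 ≤ (subst A (SPN.sum k w ch)).eval (fun _ => false) := eval_nonneg hnnS _
        have ha : 0 ≤ (subst A (SPN.sum k w ch)).eval (fun _ => true)
            / (subst A (SPN.sum k w ch)).val := div_nonneg hp0 hval.le
        have hb : 0 ≤ (subst A (SPN.sum k w ch)).eval (fun _ => false)
            / (subst A (SPN.sum k w ch)).val := div_nonneg hq0 hval.le
        have hab : (subst A (SPN.sum k w ch)).eval (fun _ => true)
              / (subst A (SPN.sum k w ch)).val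
            + (subst A (SPN.sum k w ch)).eval (fun _ => false)
              / (subst A (SPN.sum k w ch)).val = 1 := by
          rw [← add_div, ← hpq]
          exact div_self hval.ne'
        rw [hn]
        refine ⟨⟨complete_stump2 _ _ _, decomposable_stump2 _ _ _,
          weightNormalized_stump2 _ ha hb hab, normal3_stump2 _ ha hb hab⟩,
          by rw [scope_stump2]; exact hs.symm, fun x => ?_, ?_⟩
        · rw [eval_stump2]
          by_cases hx : x hX.choose = true
          · rw [if_pos hx]
            congr 1
            exact (eval_congr fun i hi => by
              rw [hs, Finset.mem_singleton] at hi; subst hi; exact hx).symm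
          · rw [if_neg hx]
            congr 1
            refine (eval_congr fun i hi => ?_).symm
            rw [hs, Finset.mem_singleton] at hi
            subst hi
            exact (Bool.not_eq_true _).mp hx
        · rw [size_stump2]
          nlinarith [size_pos (SPN.sum k w ch)]
      · by_cases h2 : 2 ≤ (subst A (SPN.sum k w ch)).scope.card
        · -- main sum branch
          have hn : norm A (SPN.sum k w ch) = SPN.sum k
              (fun j => if 0 < (subst A (ch j)).val
                then w j * (subst A (ch j)).val / (subst A (SPN.sum k w ch)).val else 0)
              (fun j => if 0 < (subst A (ch j)).val
                then norm A (ch j) else uniformOn (subst A (SPN.sum k w ch)).scope) := by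
            rw [norm, dif_neg hX, if_pos h2]
          have hchscope : ∀ j, (if 0 < (subst A (ch j)).val then norm A (ch j)
              else uniformOn (subst A (SPN.sum k w ch)).scope).scope
              = (subst A (SPN.sum k w ch)).scope := by
            intro j
            by_cases hj : 0 < (subst A (ch j)).val
            · rw [if_pos hj,
                (ih j A (hcomp.2 j) (hcons j) (hnn.2 j) (compat_child_sum hcA j) hj).2.1,
                hscope_j j]
            · rw [if_neg hj, scope_uniformOn]
          have hk : 0 < k := by
            have hne : (subst A (SPN.sum k w ch)).scope.Nonempty :=
              Finset.card_pos.mp (by omega)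
            obtain ⟨X, hXs⟩ := hne
            rw [subst_sum_def, scope_sum_def] at hXs
            obtain ⟨j, -, -⟩ := Finset.mem_biUnion.mp hXs
            exact j.pos
          have hscope_norm : (norm A (SPN.sum k w ch)).scope
              = (subst A (SPN.sum k w ch)).scope := by
            rw [hn, scope_sum_def]
            ext i
            simp only [Finset.mem_biUnion, Finset.mem_univ, true_and]
            constructor
            · rintro ⟨j, hj⟩; rwa [hchscope j] at hj
            · intro hi; exact ⟨⟨0, hk⟩, by rwa [hchscope]⟩
          have hdead : ∀ j, ¬ 0 < (subst A (ch j)).val → (subst A (ch j)).val = 0 :=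
            fun j hj => le_antisymm (not_lt.mp hj) (val_nonneg (nonnegWeights_subst A (hnn.2 j)))
          have hws : ∑ j, (if 0 < (subst A (ch j)).val
              then w j * (subst A (ch j)).val / (subst A (SPN.sum k w ch)).val else 0) = 1 := by
            have hterm : ∀ j, (if 0 < (subst A (ch j)).val
                then w j * (subst A (ch j)).val / (subst A (SPN.sum k w ch)).val else 0)
                = w j * (subst A (ch j)).val / (subst A (SPN.sum k w ch)).val := by
              intro j
              by_cases hj : 0 < (subst A (ch j)).val
              · rw [if_pos hj]
              · rw [if_neg hj, hdead j hj, mul_zero, zero_div]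
            rw [Finset.sum_congr rfl fun j _ => hterm j, ← Finset.sum_div, ← hvalsum]
            exact div_self hval.ne'
          have heval : ∀ x, (norm A (SPN.sum k w ch)).eval x
              = (subst A (SPN.sum k w ch)).eval x / (subst A (SPN.sum k w ch)).val := by
            intro x
            rw [hn, eval_sum_def]
            have hterm : ∀ j, (if 0 < (subst A (ch j)).val
                  then w j * (subst A (ch j)).val / (subst A (SPN.sum k w ch)).val else 0)
                * (if 0 < (subst A (ch j)).val then norm A (ch j)
                    else uniformOn (subst A (SPN.sum k w ch)).scope).eval x
                = w j * (subst A (ch j)).eval x / (subst A (SPN.sum k w ch)).val := by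
              intro j
              by_cases hj : 0 < (subst A (ch j)).val
              · rw [if_pos hj, if_pos hj,
                  (ih j A (hcomp.2 j) (hcons j) (hnn.2 j) (compat_child_sum hcA j) hj).2.2.1 x]
                have hvj : (subst A (ch j)).val ≠ 0 := hj.ne'
                have hv : (subst A (SPN.sum k w ch)).val ≠ 0 := hval.ne'
                field_simp
              · rw [if_neg hj, if_neg hj, zero_mul,
                  eval_eq_zero_of_val (nonnegWeights_subst A (hnn.2 j)) (hdead j hj) x,
                  mul_zero, zero_div]
            rw [Finset.sum_congr rfl fun j _ => hterm j, subst_sum_def, eval_sum_def,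
              Finset.sum_div]
          refine ⟨⟨?_, ?_, ?_, ?_⟩, hscope_norm, heval, ?_⟩
          · -- complete
            rw [hn]
            refine ⟨fun a b => by simp only [hchscope], fun j => ?_⟩
            by_cases hj : 0 < (subst A (ch j)).val
            · simp only [if_pos hj]
              exact (ih j A (hcomp.2 j) (hcons j) (hnn.2 j) (compat_child_sum hcA j) hj).1.1
            · simp only [if_neg hj]
              exact (normal_parts_uniformOn _).1
          · -- decomposable
            rw [hn]
            intro j
            by_cases hj : 0 < (subst A (ch j)).val
            · simp only [if_pos hj]
              exact (ih j A (hcomp.2 j) (hcons j) (hnn.2 j) (compat_child_sum hcA j) hj).1.2.1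
            · simp only [if_neg hj]
              exact (normal_parts_uniformOn _).2.1
          · -- weightNormalized
            rw [hn]
            refine ⟨fun j => ?_, hws, fun j => ?_⟩
            · by_cases hj : 0 < (subst A (ch j)).val
              · simp only [if_pos hj]
                exact div_nonneg (mul_nonneg (hnn.1 j) (val_nonneg
                  (nonnegWeights_subst A (hnn.2 j)))) hval.le
              · simp only [if_neg hj]
                exact le_refl 0
            · by_cases hj : 0 < (subst A (ch j)).val
              · simp only [if_pos hj]
                exact (ih j A (hcomp.2 j) (hcons j) (hnn.2 j)
                  (compat_child_sum hcA j) hj).1.2.2.1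
              · simp only [if_neg hj]
                exact (normal_parts_uniformOn _).2.2.1
          · -- normal3
            have hsc2 := hscope_norm
            rw [hn] at hsc2
            rw [hn]
            refine Or.inr ⟨by rw [hsc2]; exact h2, fun j => ?_⟩
            by_cases hj : 0 < (subst A (ch j)).val
            · simp only [if_pos hj]
              exact (ih j A (hcomp.2 j) (hcons j) (hnn.2 j)
                (compat_child_sum hcA j) hj).1.2.2.2
            · simp only [if_neg hj]
              exact (normal_parts_uniformOn _).2.2.2
          · -- size
            rw [hn, size_sum_def, size_sum_def]
            have hscard : (subst A (SPN.sum k w ch)).scope.card ≤ 1 + k + ∑ j, (ch j).size := by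
              calc (subst A (SPN.sum k w ch)).scope.card
                  ≤ (SPN.sum k w ch).scope.card :=
                    Finset.card_le_card (scope_subst_subset A _)
                _ ≤ (SPN.sum k w ch).size := card_scope_le_size _
                _ = 1 + k + ∑ j, (ch j).size := rfl
            have hchsize : ∀ j, (if 0 < (subst A (ch j)).val then norm A (ch j)
                else uniformOn (subst A (SPN.sum k w ch)).scope).size
                ≤ 7 * (ch j).size ^ 2 + (7 + 6 * (k + ∑ j, (ch j).size)) := by
              intro j
              by_cases hj : 0 < (subst A (ch j)).val
              · rw [if_pos hj]
                exact le_trans (ih j A (hcomp.2 j) (hcons j) (hnn.2 j)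
                  (compat_child_sum hcA j) hj).2.2.2 (Nat.le_add_right _ _)
              · rw [if_neg hj, size_uniformOn]
                omega
            calc 1 + k + ∑ j, (if 0 < (subst A (ch j)).val then norm A (ch j)
                  else uniformOn (subst A (SPN.sum k w ch)).scope).size
                ≤ 1 + k + ∑ j, (7 * (ch j).size ^ 2 + (7 + 6 * (k + ∑ j, (ch j).size))) :=
                  Nat.add_le_add_left (Finset.sum_le_sum fun j _ => hchsize j) _
              _ = 1 + k + (7 * ∑ j, (ch j).size ^ 2
                    + k * (7 + 6 * (k + ∑ j, (ch j).size))) := by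
                  rw [Finset.sum_add_distrib, Finset.sum_const, Finset.card_univ,
                    Fintype.card_fin, ← Finset.mul_sum, smul_eq_mul]
              _ ≤ 7 * (1 + k + ∑ j, (ch j).size) ^ 2 := by
                  have hsq : ∑ j, (ch j).size ^ 2 ≤ (∑ j, (ch j).size) ^ 2 := sum_sq_le _
                  set M := ∑ j, (ch j).size with hMdef
                  set SQ := ∑ j, (ch j).size ^ 2 with hSQdef
                  nlinarith [hsq]
        · -- empty-scope sum node
          have hs0 : (subst A (SPN.sum k w ch)).scope = ∅ := by
            rw [← Finset.card_eq_zero]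
            have h1 : (subst A (SPN.sum k w ch)).scope.card ≠ 1 := fun hc =>
              hX (Finset.card_eq_one.mp hc)
            omega
          have hn : norm A (SPN.sum k w ch) = const1 := by
            rw [norm, dif_neg hX, if_neg h2]
          have hm : Fintype.card {i : Fin N // i ∉ (subst A (SPN.sum k w ch)).scope} = N := by
            have hall : ∀ i : Fin N, i ∉ (subst A (SPN.sum k w ch)).scope := by simp [hs0]
            rw [Fintype.card_congr (Equiv.subtypeUnivEquiv hall), Fintype.card_fin]
          have hconst : ∀ x, (subst A (SPN.sum k w ch)).eval x
              = (subst A (SPN.sum k w ch)).val := by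
            intro x
            have hc1 : sumAll (subst A (SPN.sum k w ch))
                = (2:ℝ) ^ N * (subst A (SPN.sum k w ch)).val := by rw [sumAll_eq, hm]
            have hterm : ∀ y : Fin N → Bool, (subst A (SPN.sum k w ch)).eval y
                = (subst A (SPN.sum k w ch)).eval x := fun y =>
              eval_congr fun i hi => absurd (hs0 ▸ hi) (Finset.notMem_empty i)
            have hc2 : sumAll (subst A (SPN.sum k w ch))
                = (2:ℝ) ^ N * (subst A (SPN.sum k w ch)).eval x := by
              calc sumAll (subst A (SPN.sum k w ch))
                  = ∑ _y : Fin N → Bool, (subst A (SPN.sum k w ch)).eval x :=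
                    Finset.sum_congr rfl fun y _ => hterm y
                _ = (2:ℝ) ^ N * (subst A (SPN.sum k w ch)).eval x := by
                    rw [Finset.sum_const, Finset.card_univ, nsmul_eq_mul, card_bool_fun]
            exact (mul_left_cancel₀ (by positivity) (hc1.symm.trans hc2)).symm
          rw [hn]
          refine ⟨⟨complete_const1, decomposable_const1, weightNormalized_const1,
            normal3_const1⟩, by rw [scope_const1, hs0], fun x => ?_, ?_⟩
          · rw [eval_const1, hconst x, div_self hval.ne']
          · rw [size_const1]
            nlinarith [size_pos (SPN.sum k w ch)]

  | prod k ch ih =>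
      intro A hcomp hcons hnn hcA hval
      have hp : pairCons ch := hcons.1
      have hgetTb : ∀ m : Fin (sharedTb A ch).toList.length,
          (sharedTb A ch).toList.get m ∈ sharedTb A ch := fun m =>
        Finset.mem_toList.mp (by simpa using (sharedTb A ch).toList.get_mem m.1 m.2)
      have hscope_j' : ∀ j, (subst (A ∪ sharedTb A ch) (ch j)).scope
          = (subst A (ch j)).scope \ (sharedTb A ch).image Prod.fst :=
        fun j => scope_subst_union_sharedTb hp j
      -- the key pointwise factorization of the network polynomial
      have hKEY : ∀ x : Fin N → Bool, (subst A (SPN.prod k ch)).eval x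
          = (∏ m : Fin (sharedTb A ch).toList.length,
              (SPN.leaf ((sharedTb A ch).toList.get m).1
                ((sharedTb A ch).toList.get m).2).eval x)
            * ∏ j, (subst (A ∪ sharedTb A ch) (ch j)).eval x := by
        intro x
        rw [subst_prod_def, eval_prod_def]
        by_cases hag : ∀ p ∈ sharedTb A ch, x p.1 = p.2
        · have h1 : (∏ m : Fin (sharedTb A ch).toList.length,
              (SPN.leaf ((sharedTb A ch).toList.get m).1
                ((sharedTb A ch).toList.get m).2).eval x) = 1 :=
            Finset.prod_eq_one fun m _ => by
              rw [eval_leaf_def, if_pos (hag _ (hgetTb m))]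
          have h2 : ∀ j, (subst (A ∪ sharedTb A ch) (ch j)).eval x
              = (subst A (ch j)).eval x := fun j => by
            rw [subst_union]
            exact eval_subst_of_agree _ _ hag
          rw [h1, one_mul]
          exact Finset.prod_congr rfl fun j _ => (h2 j).symm
        · push_neg at hag
          obtain ⟨p, hpTb, hne⟩ := hag
          obtain ⟨m, hm⟩ := List.mem_iff_get.mp (Finset.mem_toList.mpr hpTb)
          have hR : (∏ m : Fin (sharedTb A ch).toList.length,
              (SPN.leaf ((sharedTb A ch).toList.get m).1
                ((sharedTb A ch).toList.get m).2).eval x) = 0 :=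
            Finset.prod_eq_zero (Finset.mem_univ m) (by
              rw [eval_leaf_def, if_neg]
              rw [hm]
              exact hne)
          obtain ⟨X, b⟩ := p
          have hpTb' := hpTb
          simp only [sharedTb, Finset.mem_filter] at hpTb'
          obtain ⟨-, a, c, hac, hXa, hXc⟩ := hpTb'
          have hnotin : (X, x X) ∉ (subst A (ch a)).indicators := fun hmem =>
            hne (sharedTb_uniq hp hpTb hmem)
          have hz : (subst A (ch a)).eval x = 0 :=
            eval_eq_zero (complete_subst A (hcomp a) (compat_child_prod hcA a)) hXa hnotin
          rw [hR, zero_mul]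
          exact Finset.prod_eq_zero (Finset.mem_univ a) hz
      -- scope bookkeeping
      have hscopeP1 : (Finset.univ.biUnion fun m : Fin (sharedTb A ch).toList.length =>
          ({((sharedTb A ch).toList.get m).1} : Finset (Fin N)))
          = (sharedTb A ch).image Prod.fst := by
        ext i
        simp only [Finset.mem_biUnion, Finset.mem_univ, true_and, Finset.mem_singleton,
          Finset.mem_image]
        constructor
        · rintro ⟨m, hm⟩
          exact ⟨_, hgetTb m, hm.symm⟩
        · rintro ⟨q, hq, rfl⟩
          obtain ⟨m, hm⟩ := List.mem_iff_get.mp (Finset.mem_toList.mpr hq)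
          exact ⟨m, by rw [hm]⟩
      have hTsub : (sharedTb A ch).image Prod.fst ⊆ (subst A (SPN.prod k ch)).scope := by
        intro X hX
        obtain ⟨q, hq, rfl⟩ := Finset.mem_image.mp hX
        simp only [sharedTb, Finset.mem_filter] at hq
        obtain ⟨hq0, -⟩ := hq
        obtain ⟨mj, -, hmj⟩ := Finset.mem_biUnion.mp hq0
        rw [subst_prod_def, scope_prod_def]
        exact Finset.mem_biUnion.mpr ⟨mj, Finset.mem_univ mj, mem_scope_iff.mpr ⟨q.2, hmj⟩⟩
      have hSc : (subst A (SPN.prod k ch)).scope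
          = (sharedTb A ch).image Prod.fst
            ∪ Finset.univ.biUnion fun j => (subst (A ∪ sharedTb A ch) (ch j)).scope := by
        ext i
        constructor
        · intro hi
          by_cases hiT : i ∈ (sharedTb A ch).image Prod.fst
          · exact Finset.mem_union_left _ hiT
          · rw [subst_prod_def, scope_prod_def] at hi
            obtain ⟨j, -, hj⟩ := Finset.mem_biUnion.mp hi
            refine Finset.mem_union_right _ (Finset.mem_biUnion.mpr ⟨j, Finset.mem_univ j, ?_⟩)
            rw [hscope_j' j]
            exact Finset.mem_sdiff.mpr ⟨hj, hiT⟩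
        · intro hi
          rcases Finset.mem_union.mp hi with hiT | hiU
          · exact hTsub hiT
          · obtain ⟨j, -, hj⟩ := Finset.mem_biUnion.mp hiU
            rw [hscope_j' j, Finset.mem_sdiff] at hj
            rw [subst_prod_def, scope_prod_def]
            exact Finset.mem_biUnion.mpr ⟨j, Finset.mem_univ j, hj.1⟩
      -- disjointness
      have hdisjT : Disjoint ((sharedTb A ch).image Prod.fst)
          (Finset.univ.biUnion fun j => (subst (A ∪ sharedTb A ch) (ch j)).scope) := by
        rw [Finset.disjoint_biUnion_right]
        intro j _
        rw [hscope_j' j]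
        exact Finset.sdiff_disjoint.symm
      have hdisjCh : ∀ a b : Fin k, a ≠ b →
          Disjoint (subst (A ∪ sharedTb A ch) (ch a)).scope
            (subst (A ∪ sharedTb A ch) (ch b)).scope := by
        intro a b hab
        rw [hscope_j' a, hscope_j' b, Finset.disjoint_left]
        intro i hia hib
        rw [Finset.mem_sdiff] at hia hib
        exact hia.2 (shared_mem_image hab hia.1 hib.1)
      have hdisjLeaf : ∀ m m' : Fin (sharedTb A ch).toList.length, m ≠ m' →
          ((sharedTb A ch).toList.get m).1 ≠ ((sharedTb A ch).toList.get m').1 := by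
        intro m m' hmm heq
        have hgg : (sharedTb A ch).toList.get m = (sharedTb A ch).toList.get m' :=
          sharedTb_fst_inj hp (hgetTb m) (hgetTb m') heq
        exact hmm (List.nodup_iff_injective_get.mp (sharedTb A ch).nodup_toList hgg)
      -- value factorization
      have hvalP1 : (SPN.prod (sharedTb A ch).toList.length fun m =>
          SPN.leaf ((sharedTb A ch).toList.get m).1 ((sharedTb A ch).toList.get m).2).val
          = 1 := by
        rw [val_prod _ (fun a b hab => by
          simp only [scope_leaf_def]
          exact Finset.disjoint_singleton.mpr (hdisjLeaf a b hab))]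
        exact Finset.prod_eq_one fun m _ => val_leaf _ _
      have hvalP2 : (SPN.prod k fun j => subst (A ∪ sharedTb A ch) (ch j)).val
          = ∏ j, (subst (A ∪ sharedTb A ch) (ch j)).val := val_prod _ hdisjCh
      have hve : (subst A (SPN.prod k ch)).val
          = (SPN.prod 2 fun t => if t = 0 then
              (SPN.prod (sharedTb A ch).toList.length fun m =>
                SPN.leaf ((sharedTb A ch).toList.get m).1 ((sharedTb A ch).toList.get m).2)
              else SPN.prod k fun j => subst (A ∪ sharedTb A ch) (ch j)).val := by
        apply val_congr
        · rw [prod2_scope, scope_prod_def, scope_prod_def]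
          simp only [scope_leaf_def]
          rw [hscopeP1]
          exact hSc
        · intro x
          rw [prod2_eval]
          exact hKEY x
      have hd2 : Disjoint (SPN.prod (sharedTb A ch).toList.length fun m =>
            SPN.leaf ((sharedTb A ch).toList.get m).1 ((sharedTb A ch).toList.get m).2).scope
          (SPN.prod k fun j => subst (A ∪ sharedTb A ch) (ch j)).scope := by
        rw [scope_prod_def, scope_prod_def]
        simp only [scope_leaf_def]
        rw [hscopeP1]
        exact hdisjT
      have hvfac : (subst A (SPN.prod k ch)).val
          = ∏ j, (subst (A ∪ sharedTb A ch) (ch j)).val := by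
        rw [hve, val_prod _ (fun a b hab => by
          fin_cases a <;> fin_cases b
          · exact absurd rfl hab
          · simpa using hd2
          · simpa using hd2.symm
          · exact absurd rfl hab), Fin.prod_univ_two]
        simp only [reduceIte]
        rw [hvalP1]
        rw [if_neg (show ¬ (1 : Fin 2) = 0 by decide), hvalP2, one_mul]
      have hvpos : ∀ j, 0 < (subst (A ∪ sharedTb A ch) (ch j)).val := by
        intro j
        rcases lt_or_eq_of_le (val_nonneg (nonnegWeights_subst _ (hnn j))) with h | h
        · exact h
        · exfalso
          have h0 : (subst A (SPN.prod k ch)).val = 0 := by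
            rw [hvfac]
            exact Finset.prod_eq_zero (Finset.mem_univ j) h.symm
          rw [h0] at hval
          exact lt_irrefl _ hval
      have spec := fun j => ih j (A ∪ sharedTb A ch) (hcomp j) (hcons.2 j) (hnn j)
        (compat_union_sharedTb hp hcA j) (hvpos j)
      -- the normalized node
      have hn : norm A (SPN.prod k ch) = SPN.prod 2 (fun t => if t = 0 then
          (SPN.prod (sharedTb A ch).toList.length fun m =>
            detStump ((sharedTb A ch).toList.get m).1 ((sharedTb A ch).toList.get m).2)
          else SPN.prod k fun j => norm (A ∪ sharedTb A ch) (ch j)) := by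
        rw [norm]
      have hscopeQ1 : (SPN.prod (sharedTb A ch).toList.length fun m =>
          detStump ((sharedTb A ch).toList.get m).1 ((sharedTb A ch).toList.get m).2).scope
          = (sharedTb A ch).image Prod.fst := by
        rw [scope_prod_def]
        simp only [scope_detStump]
        exact hscopeP1
      have hscopeQ2 : (SPN.prod k fun j => norm (A ∪ sharedTb A ch) (ch j)).scope
          = Finset.univ.biUnion fun j => (subst (A ∪ sharedTb A ch) (ch j)).scope := by
        rw [scope_prod_def]
        exact Finset.biUnion_congr rfl fun j _ => (spec j).2.1
      have hscopeN : (norm A (SPN.prod k ch)).scope = (subst A (SPN.prod k ch)).scope := by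
        rw [hn, prod2_scope, hscopeQ1, hscopeQ2]
        exact hSc.symm
      have hevalN : ∀ x, (norm A (SPN.prod k ch)).eval x
          = (subst A (SPN.prod k ch)).eval x / (subst A (SPN.prod k ch)).val := by
        intro x
        rw [hn, prod2_eval, hKEY x, hvfac]
        have hq1 : (SPN.prod (sharedTb A ch).toList.length fun m =>
            detStump ((sharedTb A ch).toList.get m).1 ((sharedTb A ch).toList.get m).2).eval x
            = ∏ m : Fin (sharedTb A ch).toList.length,
              (SPN.leaf ((sharedTb A ch).toList.get m).1
                ((sharedTb A ch).toList.get m).2).eval x := by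
          rw [eval_prod_def]
          exact Finset.prod_congr rfl fun m _ => by rw [eval_detStump, eval_leaf_def]
        have hq2 : (SPN.prod k fun j => norm (A ∪ sharedTb A ch) (ch j)).eval x
            = (∏ j, (subst (A ∪ sharedTb A ch) (ch j)).eval x)
              / ∏ j, (subst (A ∪ sharedTb A ch) (ch j)).val := by
          rw [eval_prod_def,
            Finset.prod_congr rfl fun j (_ : j ∈ Finset.univ) => (spec j).2.2.1 x]
          exact Finset.prod_div_distrib _ _
        rw [hq1, hq2, mul_div_assoc]
      refine ⟨?_, hscopeN, hevalN, ?_⟩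
      · -- normality parts
        rw [hn]
        apply prod2_parts
        · apply prodk_parts
          · intro m
            exact normal_parts_detStump _ _
          · intro a b hab
            simp only [scope_detStump]
            exact Finset.disjoint_singleton.mpr (hdisjLeaf a b hab)
        · apply prodk_parts
          · intro j
            exact (spec j).1
          · intro a b hab
            rw [(spec a).2.1, (spec b).2.1]
            exact hdisjCh a b hab
        · rw [hscopeQ1, hscopeQ2]
          exact hdisjT
      · -- size
        rw [hn, prod2_size]
        have hsQ1 : (SPN.prod (sharedTb A ch).toList.length fun m =>
            detStump ((sharedTb A ch).toList.get m).1 ((sharedTb A ch).toList.get m).2).size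
            = 1 + 6 * (sharedTb A ch).toList.length := by
          rw [size_prod_def]
          simp only [size_detStump]
          rw [Finset.sum_const, Finset.card_univ, Fintype.card_fin, smul_eq_mul]
          ring
        have hsQ2 : (SPN.prod k fun j => norm (A ∪ sharedTb A ch) (ch j)).size
            ≤ 1 + k + 7 * ∑ j, (ch j).size ^ 2 := by
          rw [size_prod_def]
          have hb1 : ∑ j, (norm (A ∪ sharedTb A ch) (ch j)).size
              ≤ ∑ j, 7 * (ch j).size ^ 2 :=
            Finset.sum_le_sum fun j _ => (spec j).2.2.2
          rw [← Finset.mul_sum] at hb1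
          omega
        have hLM : (sharedTb A ch).toList.length ≤ ∑ j, (ch j).size := by
          calc (sharedTb A ch).toList.length = (sharedTb A ch).card :=
              Finset.length_toList _
            _ ≤ (SPN.prod k ch).scope.card := card_sharedTb_le hp
            _ ≤ ∑ j, (ch j).scope.card := by
                rw [scope_prod_def]
                exact Finset.card_biUnion_le
            _ ≤ ∑ j, (ch j).size := Finset.sum_le_sum fun j _ => card_scope_le_size _
        have hsq : ∑ j, (ch j).size ^ 2 ≤ (∑ j, (ch j).size) ^ 2 := sum_sq_le _
        have hgoal : (SPN.prod k ch).size = 1 + k + ∑ j, (ch j).size := rfl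
        rw [hgoal]
        set M := ∑ j, (ch j).size with hMdef
        set SQ := ∑ j, (ch j).size ^ 2 with hSQdef
        set LL := (sharedTb A ch).toList.length with hLdef
        nlinarith [hsQ1, hsQ2, hLM, hsq]


end SPN
/-- For any complete and consistent SPN `S` (with nonnegative
weights and positive normalizer, so that `Pr_S` is well defined) there exists a
normal SPN `S'` with `Pr_{S'} = Pr_S` and `|S'| = O(|S|^2)`, where a normal SPN
is complete and decomposable, weight-normalized at every sum node, has every
terminal node a univariate distribution over a Boolean variable and every sum
node of scope size at least 2. -/
theorem spn_normalization :
    ∃ C : ℕ, ∀ (N : ℕ) (S : SPN N), S.complete → S.consistent →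
      S.nonnegWeights → 0 < S.val →
      ∃ S' : SPN N, S'.normal ∧ (∀ x : Fin N → Bool, S'.Pr x = S.Pr x) ∧
        S'.size ≤ C * S.size ^ 2 := by
  refine ⟨7, fun N S hcomp hcons hnn hval => ?_⟩
  have hval' : 0 < (SPN.subst ∅ S).val := by rwa [SPN.subst_empty]
  obtain ⟨hparts, hscope, heval, hsize⟩ :=
    SPN.norm_spec S ∅ hcomp hcons hnn (SPN.compat_empty S) hval'
  rw [SPN.subst_empty] at hscope heval
  refine ⟨SPN.norm ∅ S, ⟨hparts.1, hparts.2.1, hparts.2.2.1, hparts.2.2.2⟩,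
    fun x => ?_, hsize⟩
  have hcardeq : (SPN.norm ∅ S).scope.card = S.scope.card := by rw [hscope]
  have e1 := SPN.card_compl_scope (SPN.norm ∅ S)
  have e2 := SPN.card_compl_scope S
  have hm : Fintype.card {i : Fin N // i ∉ (SPN.norm ∅ S).scope}
      = Fintype.card {i : Fin N // i ∉ S.scope} := by omega
  have hv1 : (SPN.norm ∅ S).val = 1 := by
    have h1 : SPN.sumAll (SPN.norm ∅ S)
        = (2:ℝ) ^ (Fintype.card {i : Fin N // i ∉ S.scope}) * (SPN.norm ∅ S).val := by
      rw [SPN.sumAll_eq, hm]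
    have h2 : SPN.sumAll (SPN.norm ∅ S)
        = (2:ℝ) ^ (Fintype.card {i : Fin N // i ∉ S.scope}) := by
      calc SPN.sumAll (SPN.norm ∅ S)
          = ∑ x : Fin N → Bool, S.eval x / S.val :=
            Finset.sum_congr rfl fun x _ => heval x
        _ = SPN.sumAll S / S.val := by rw [SPN.sumAll, Finset.sum_div]
        _ = (2:ℝ) ^ (Fintype.card {i : Fin N // i ∉ S.scope}) * S.val / S.val := by
            rw [SPN.sumAll_eq]
        _ = (2:ℝ) ^ (Fintype.card {i : Fin N // i ∉ S.scope}) := by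
            rw [mul_div_assoc, div_self hval.ne', mul_one]
    exact mul_left_cancel₀ (a := (2:ℝ) ^ (Fintype.card {i : Fin N // i ∉ S.scope}))
      (by positivity) (by rw [mul_one]; exact h1.symm.trans h2)
  simp only [SPN.Pr]
  rw [hv1, heval x, div_one]
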